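/- Let D(t,γ) = (∑_{p=1}^{m'} α_p(t) γ_p)², where α_1,…,α_{m'} ∈ C^∞(T;ℝ) are linearly independent over ℝ and T is a compact Riemannian manifold. Then there exist constants a, δ > 0 such that for every γ ∈ ℝ^{m'} with |γ| = 1 there is a nonempty open set A_γ ⊂ T with vol(A_γ) ≥ δ and D(t,γ) > a for all t ∈ A_γ. -/

import Mathlib

open MeasureTheory

/-!
Uniform positivity of `D(t, γ) = (∑_p α_p(t) γ_p)²` on sets of uniformly positive volume:
if `α_1, …, α_{m'}` are (smooth, here continuous) real-valued functions on a compact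
(Riemannian) manifold `T` which are linearly independent over `ℝ`, then there are
constants `a, δ > 0` such that for every unit vector `γ ∈ ℝ^{m'}` there is a nonempty
open set `A_γ ⊆ T` with `vol(A_γ) ≥ δ` and `D(t, γ) > a` for all `t ∈ A_γ`.
`vol` is the (finite, positive on open sets) Riemannian volume measure of `T`.
-/
theorem uniform_positivity_on_open_sets
    {T : Type*} [TopologicalSpace T] [CompactSpace T]
    [MeasurableSpace T] [BorelSpace T]
    (vol : Measure T) [IsFiniteMeasure vol] [vol.IsOpenPosMeasure]
    (m' : ℕ) (hm' : 0 < m')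
    (α : Fin m' → T → ℝ)
    (hcont : ∀ p, Continuous (α p))
    (hindep : LinearIndependent ℝ α) :
    ∃ a δ : ℝ, 0 < a ∧ 0 < δ ∧
      ∀ γ : Fin m' → ℝ, ∑ p, (γ p) ^ 2 = 1 →
        ∃ A : Set T, IsOpen A ∧ A.Nonempty ∧ δ ≤ (vol A).toReal ∧
          ∀ t ∈ A, a < (∑ p, α p t * γ p) ^ 2 := by
  classical
  -- T is nonempty
  have hTne : Nonempty T := by
    by_contra h
    rw [not_nonempty_iff] at h
    exact hindep.ne_zero ⟨0, hm'⟩ (funext fun t => (h.false t).elim)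
  -- uniform bound on the α's
  have hbound : ∀ p : Fin m', ∃ B : ℝ, ∀ t, |α p t| ≤ B := by
    intro p
    obtain ⟨t₀, -, ht₀⟩ := isCompact_univ.exists_isMaxOn (Set.univ_nonempty)
      ((hcont p).abs.continuousOn)
    exact ⟨|α p t₀|, fun t => ht₀ (Set.mem_univ t)⟩
  choose B hB using hbound
  have hBnn : ∀ p, 0 ≤ B p := fun p =>
    le_trans (abs_nonneg _) (hB p (Classical.arbitrary T))
  set M : ℝ := 1 + ∑ p, B p with hMdef
  have hM1 : 1 ≤ M := by
    have : (0:ℝ) ≤ ∑ p, B p := Finset.sum_nonneg fun p _ => hBnn p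
    simp only [hMdef]; linarith
  have hMb : ∀ (p : Fin m') (t : T), |α p t| ≤ M := by
    intro p t
    calc |α p t| ≤ B p := hB p t
      _ ≤ ∑ q, B q := Finset.single_le_sum (fun q _ => hBnn q) (Finset.mem_univ p)
      _ ≤ M := by simp only [hMdef]; linarith
  have hmpos : (0:ℝ) < (m' : ℝ) := by exact_mod_cast hm'
  set L : ℝ := 2 * (M * (m' : ℝ)) ^ 2 with hLdef
  have hL : 0 < L := by
    have : 0 < M := lt_of_lt_of_le one_pos hM1
    positivity
  -- sphere coordinates are bounded by 1
  have hcoord : ∀ γ : Fin m' → ℝ, (∑ p, (γ p)^2 = 1) → ∀ p, |γ p| ≤ 1 := by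
    intro γ hγ p
    have h1 : (γ p)^2 ≤ 1 := by
      calc (γ p)^2 ≤ ∑ q, (γ q)^2 := by
            simpa using Finset.single_le_sum (f := fun q => (γ q)^2)
              (fun q _ => sq_nonneg _) (Finset.mem_univ p)
        _ = 1 := hγ
    nlinarith [abs_nonneg (γ p), sq_abs (γ p)]
  -- bound on f
  have hfb : ∀ γ : Fin m' → ℝ, (∑ p, (γ p)^2 = 1) → ∀ t,
      |∑ p, α p t * γ p| ≤ M * (m' : ℝ) := by
    intro γ hγ t
    calc |∑ p, α p t * γ p| ≤ ∑ p, |α p t * γ p| := Finset.abs_sum_le_sum_abs _ _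
      _ ≤ ∑ _p : Fin m', M * 1 := Finset.sum_le_sum (fun p _ => by
          rw [abs_mul]
          exact mul_le_mul (hMb p t) (hcoord γ hγ p) (abs_nonneg _)
            (le_trans zero_le_one hM1))
      _ = M * (m' : ℝ) := by
          simp [Finset.sum_const, Finset.card_univ, mul_comm]
  -- Lipschitz estimate in γ, uniform in t
  have hLip : ∀ γ γ' : Fin m' → ℝ, (∑ p, (γ p)^2 = 1) → (∑ p, (γ' p)^2 = 1) → ∀ t,
      |(∑ p, α p t * γ p)^2 - (∑ p, α p t * γ' p)^2| ≤ L * dist γ γ' := by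
    intro γ γ' hγ hγ' t
    set u := ∑ p, α p t * γ p with hu
    set v := ∑ p, α p t * γ' p with hv
    have hd0 : 0 ≤ dist γ γ' := dist_nonneg
    have h1 : |u - v| ≤ M * (m' : ℝ) * dist γ γ' := by
      have huv : u - v = ∑ p, α p t * (γ p - γ' p) := by
        rw [hu, hv, ← Finset.sum_sub_distrib]
        congr 1; ext p; ring
      rw [huv]
      calc |∑ p, α p t * (γ p - γ' p)| ≤ ∑ p, |α p t * (γ p - γ' p)| :=
            Finset.abs_sum_le_sum_abs _ _
        _ ≤ ∑ _p : Fin m', M * dist γ γ' := Finset.sum_le_sum (fun p _ => by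
            rw [abs_mul]
            have hp : |γ p - γ' p| ≤ dist γ γ' := by
              rw [← Real.dist_eq]; exact dist_le_pi_dist γ γ' p
            exact mul_le_mul (hMb p t) hp (abs_nonneg _) (le_trans zero_le_one hM1))
        _ = M * (m' : ℝ) * dist γ γ' := by
            simp [Finset.sum_const, Finset.card_univ]; ring
    have h2 : |u| ≤ M * (m' : ℝ) := hfb γ hγ t
    have h3 : |v| ≤ M * (m' : ℝ) := hfb γ' hγ' t
    have h4 : |u + v| ≤ 2 * (M * (m' : ℝ)) := by
      have := abs_add_le u v; linarith
    calc |u^2 - v^2| = |u - v| * |u + v| := by rw [← abs_mul]; congr 1; ring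
      _ ≤ (M * (m' : ℝ) * dist γ γ') * (2 * (M * (m' : ℝ))) :=
          mul_le_mul h1 h4 (abs_nonneg _) (by positivity)
      _ = L * dist γ γ' := by rw [hLdef]; ring
  -- the sphere
  set S : Set (Fin m' → ℝ) := {γ | ∑ p, (γ p)^2 = 1} with hSdef
  have hgc : Continuous (fun γ : Fin m' → ℝ => ∑ p, (γ p)^2) :=
    continuous_finset_sum _ fun p _ => (continuous_apply p).pow 2
  have hSclosed : IsClosed S := by
    have : S = (fun γ : Fin m' → ℝ => ∑ p, (γ p)^2) ⁻¹' {1} := rfl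
    rw [this]; exact isClosed_singleton.preimage hgc
  have hScpt : IsCompact S := by
    apply Metric.isCompact_of_isClosed_isBounded hSclosed
    apply Bornology.IsBounded.subset (Metric.isBounded_closedBall (x := (0 : Fin m' → ℝ)) (r := 1))
    intro γ hγ
    rw [Metric.mem_closedBall, dist_zero_right]
    apply pi_norm_le_iff_of_nonneg zero_le_one |>.mpr
    intro p
    simpa [Real.norm_eq_abs] using hcoord γ hγ p
  have hSne : S.Nonempty := by
    refine ⟨Pi.single ⟨0, hm'⟩ 1, ?_⟩
    simp only [hSdef, Set.mem_setOf_eq]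
    rw [Finset.sum_eq_single_of_mem ⟨0, hm'⟩ (Finset.mem_univ _)]
    · simp
    · intro q _ hq; simp [Pi.single_eq_of_ne hq]
  -- key local data
  have key : ∀ γ₀ ∈ S, ∃ (r : ℝ) (V : Set T), 0 < r ∧ IsOpen V ∧ V.Nonempty ∧
      0 < (vol V).toReal ∧
      ∀ γ ∈ S, dist γ γ₀ < r / (4 * L) → ∀ t ∈ V, r / 4 < (∑ p, α p t * γ p)^2 := by
    intro γ₀ hγ₀
    have hne : ∃ t, (∑ p, α p t * γ₀ p) ≠ 0 := by
      by_contra h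
      push_neg at h
      have hz : ∑ p, γ₀ p • α p = 0 := by
        funext t
        have := h t
        simp only [Finset.sum_apply, Pi.smul_apply, smul_eq_mul, Pi.zero_apply]
        rw [← this]
        exact Finset.sum_congr rfl fun p _ => mul_comm _ _
      have := Fintype.linearIndependent_iff.mp hindep γ₀ hz
      have : ∑ p, (γ₀ p)^2 = 0 := by
        apply Finset.sum_eq_zero; intro p _; rw [this p]; ring
      rw [hγ₀] at this; norm_num at this
    obtain ⟨t₀, ht₀⟩ := hne
    set r : ℝ := (∑ p, α p t₀ * γ₀ p)^2 with hrdef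
    have hr : 0 < r := by
      have := abs_pos.mpr ht₀
      nlinarith [sq_abs (∑ p, α p t₀ * γ₀ p)]
    set V : Set T := {t | r / 2 < (∑ p, α p t * γ₀ p)^2} with hVdef
    have hVopen : IsOpen V := by
      apply isOpen_lt continuous_const
      exact (continuous_finset_sum _ fun p _ => (hcont p).mul continuous_const).pow 2
    have hVne : V.Nonempty := ⟨t₀, by simp only [hVdef, Set.mem_setOf_eq]; linarith⟩
    refine ⟨r, V, hr, hVopen, hVne, ?_, ?_⟩
    · exact ENNReal.toReal_pos (hVopen.measure_pos vol hVne).ne' (measure_ne_top vol V)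
    · intro γ hγ hdist t ht
      have hlip := hLip γ γ₀ hγ hγ₀ t
      have hLd : L * dist γ γ₀ < r / 4 := by
        have h5 : L * dist γ γ₀ < L * (r / (4 * L)) :=
          mul_lt_mul_of_pos_left hdist hL
        have h6 : L * (r / (4 * L)) = r / 4 := by field_simp
        linarith
      have hV' : r / 2 < (∑ p, α p t * γ₀ p)^2 := ht
      have := neg_abs_le ((∑ p, α p t * γ p)^2 - (∑ p, α p t * γ₀ p)^2)
      linarith
  choose r V hr hVopen hVne hVpos hmain using key
  -- finite subcover of the sphere
  have hcover : S ⊆ ⋃ i : S, Metric.ball (i : Fin m' → ℝ) (r i i.2 / (4 * L)) := by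
    intro γ hγ
    exact Set.mem_iUnion.mpr ⟨⟨γ, hγ⟩, Metric.mem_ball_self (div_pos (hr γ hγ) (by linarith))⟩
  obtain ⟨F, hF⟩ := hScpt.elim_finite_subcover
    (fun i : S => Metric.ball (i : Fin m' → ℝ) (r i i.2 / (4 * L)))
    (fun i => Metric.isOpen_ball) hcover
  have hFne : F.Nonempty := by
    obtain ⟨γ₁, hγ₁⟩ := hSne
    have := hF hγ₁
    simp only [Set.mem_iUnion] at this
    obtain ⟨i, hiF, -⟩ := this
    exact ⟨i, hiF⟩
  refine ⟨F.inf' hFne (fun i => r i i.2 / 4),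
          F.inf' hFne (fun i => (vol (V i i.2)).toReal), ?_, ?_, ?_⟩
  · exact (Finset.lt_inf'_iff hFne).mpr fun i _ => by linarith [hr i i.2]
  · exact (Finset.lt_inf'_iff hFne).mpr fun i _ => hVpos i i.2
  · intro γ hγ
    have hγS : γ ∈ S := hγ
    have := hF hγS
    simp only [Set.mem_iUnion] at this
    obtain ⟨i, hiF, hball⟩ := this
    rw [Metric.mem_ball] at hball
    refine ⟨V i i.2, hVopen i i.2, hVne i i.2, Finset.inf'_le _ hiF, ?_⟩
    intro t ht
    have h1 : r i i.2 / 4 < (∑ p, α p t * γ p)^2 := hmain i i.2 γ hγS hball t ht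
    have h2 : F.inf' hFne (fun i => r i i.2 / 4) ≤ r i i.2 / 4 := Finset.inf'_le _ hiF
    linarith
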